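/- Let n ≥ 1 and let ψ : [0,1]^n → ℝ be monotonic, continuous, and quasiconcave with ψ(c·1) = c for all c ∈ [0,1]. Suppose that ψ(αu + (1−α)c·1) = ψ(αu) + (1−α)c for all u ∈ [0,1]^n, all c ∈ [0,1], and all α ∈ (0,1). Then ψ is translation-invariant and concave. -/

import Mathlib

open Filter Topology


/-- A continuous function on `[0,1]` satisfying the chord inequality on all
short subintervals satisfies it for the endpoints `0` and `1`. -/
lemma stmt13_lemA (g : ℝ → ℝ) (hg : ContinuousOn g (Set.Icc 0 1)) (d : ℝ) (hd : 0 < d)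
    (W : ∀ s t θ : ℝ, s ∈ Set.Icc (0:ℝ) 1 → t ∈ Set.Icc (0:ℝ) 1 → |s - t| < d →
      θ ∈ Set.Icc (0:ℝ) 1 → (1 - θ) * g s + θ * g t ≤ g ((1 - θ) * s + θ * t)) :
    ∀ m ∈ Set.Icc (0:ℝ) 1, (1 - m) * g 0 + m * g 1 ≤ g m := by
  set h : ℝ → ℝ := fun x => g x - ((1 - x) * g 0 + x * g 1) with hh
  have hhc : ContinuousOn h (Set.Icc 0 1) := hg.sub (by fun_prop)
  suffices H : ∀ m ∈ Set.Icc (0:ℝ) 1, 0 ≤ h m by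
    intro m hm; have := H m hm; simp only [hh] at this; linarith
  by_contra hcon
  push_neg at hcon
  obtain ⟨m0, hm0, hm0neg⟩ := hcon
  obtain ⟨x0, hx0mem, hx0min⟩ :=
    isCompact_Icc.exists_isMinOn (⟨0, by norm_num⟩ : (Set.Icc (0:ℝ) 1).Nonempty) hhc
  have hmin : ∀ x ∈ Set.Icc (0:ℝ) 1, h x0 ≤ h x := fun x hx => hx0min hx
  set μ := h x0 with hμ
  have hμneg : μ < 0 := lt_of_le_of_lt (hmin m0 hm0) hm0neg
  set K := Set.Icc (0:ℝ) 1 ∩ h ⁻¹' Set.Iic μ with hK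
  have hKc : IsClosed K := hhc.preimage_isClosed_of_isClosed isClosed_Icc isClosed_Iic
  have hKne : K.Nonempty := ⟨x0, hx0mem, le_refl μ⟩
  have hKbdd : BddAbove K := bddAbove_Icc.mono Set.inter_subset_left
  set m := sSup K with hm
  have hmK : m ∈ K := hKc.csSup_mem hKne hKbdd
  obtain ⟨hmI, hmμ⟩ := hmK
  have hmμ' : h m ≤ μ := hmμ
  have h0 : h 0 = 0 := by simp only [hh]; ring
  have h1 : h 1 = 0 := by simp only [hh]; ring
  have hm0' : (0:ℝ) < m := by
    rcases lt_or_eq_of_le hmI.1 with h' | h'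
    · exact h'
    · exfalso; rw [← h'] at hmμ'; rw [h0] at hmμ'; linarith
  have hm1' : m < 1 := by
    rcases lt_or_eq_of_le hmI.2 with h' | h'
    · exact h'
    · exfalso; rw [h', h1] at hmμ'; linarith
  set e := min (min d m) (1 - m) / 3 with he
  have he0 : 0 < e := by
    apply div_pos _ (by norm_num)
    exact lt_min (lt_min hd hm0') (by linarith)
  have hed : e ≤ d / 3 := by
    have : min (min d m) (1 - m) ≤ d := le_trans (min_le_left _ _) (min_le_left _ _)
    rw [he]; linarith
  have hem : e ≤ m / 3 := by
    have : min (min d m) (1 - m) ≤ m := le_trans (min_le_left _ _) (min_le_right _ _)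
    rw [he]; linarith
  have he1m : e ≤ (1 - m) / 3 := by
    have : min (min d m) (1 - m) ≤ 1 - m := min_le_right _ _
    rw [he]; linarith
  set p := m - e with hp
  set q := m + e with hq
  have hpI : p ∈ Set.Icc (0:ℝ) 1 := ⟨by rw [hp]; linarith, by rw [hp]; linarith⟩
  have hqI : q ∈ Set.Icc (0:ℝ) 1 := ⟨by rw [hq]; linarith, by rw [hq]; linarith⟩
  have hpq : |p - q| < d := by
    have h2 : p - q = -(2 * e) := by rw [hp, hq]; ring
    rw [h2, abs_neg, abs_of_pos (by linarith)]; linarith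
  have hWpq := W p q (1/2) hpI hqI hpq ⟨by norm_num, by norm_num⟩
  have hmid : (1 - (1:ℝ)/2) * p + (1/2) * q = m := by rw [hp, hq]; ring
  rw [hmid] at hWpq
  -- h p ≥ μ, h q > μ
  have hBp : μ ≤ h p := hmin p hpI
  have hCq : μ < h q := by
    by_contra hc
    push_neg at hc
    have : q ∈ K := ⟨hqI, hc⟩
    have := le_csSup hKbdd this
    rw [← hm] at this
    rw [hq] at this; linarith
  have hL : (1 - p) * g 0 + p * g 1 + ((1 - q) * g 0 + q * g 1)
      = 2 * ((1 - m) * g 0 + m * g 1) := by rw [hp, hq]; ring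
  simp only [hh] at hBp hCq hmμ'
  linarith

lemma stmt13_lemB {n : ℕ} (ψ : (Fin n → ℝ) → ℝ)
    (hcont : ContinuousOn ψ (Set.Icc (0 : Fin n → ℝ) 1))
    (hqc : ∀ u v : Fin n → ℝ, u ∈ Set.Icc (0 : Fin n → ℝ) 1 →
      v ∈ Set.Icc (0 : Fin n → ℝ) 1 → ∀ α : ℝ, α ∈ Set.Icc (0 : ℝ) 1 →
      min (ψ u) (ψ v) ≤ ψ (α • u + (1 - α) • v))
    (ti : ∀ u : Fin n → ℝ, u ∈ Set.Icc (0 : Fin n → ℝ) 1 → ∀ c : ℝ,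
      (u + fun _ => c) ∈ Set.Icc (0 : Fin n → ℝ) 1 →
      ψ (u + fun _ => c) = ψ u + c)
    (η : ℝ) (hη : 0 < η)
    (u v : Fin n → ℝ) (hu : ∀ i, η ≤ u i ∧ u i ≤ 1) (hv : ∀ i, η ≤ v i ∧ v i ≤ 1)
    (α : ℝ) (hα : α ∈ Set.Icc (0:ℝ) 1) :
    α * ψ u + (1 - α) * ψ v ≤ ψ (α • u + (1 - α) • v) := by
  classical
  set x : ℝ → Fin n → ℝ := fun t => fun i => (1 - t) * u i + t * v i with hxdef
  have hxlb : ∀ t ∈ Set.Icc (0:ℝ) 1, ∀ i, η ≤ x t i ∧ x t i ≤ 1 := by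
    intro t ht i
    have h1 := (hu i).1; have h2 := (hu i).2
    have h3 := (hv i).1; have h4 := (hv i).2
    constructor
    · have e1 : 0 ≤ (1 - t) * (u i - η) := mul_nonneg (by linarith [ht.2]) (by linarith)
      have e2 : 0 ≤ t * (v i - η) := mul_nonneg ht.1 (by linarith)
      simp only [hxdef]; nlinarith
    · have e1 : (1 - t) * u i ≤ (1 - t) * 1 := by
        apply mul_le_mul_of_nonneg_left h2 (by linarith [ht.2])
      have e2 : t * v i ≤ t * 1 := mul_le_mul_of_nonneg_left h4 ht.1
      simp only [hxdef]; nlinarith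
  have hxcube : ∀ t ∈ Set.Icc (0:ℝ) 1, x t ∈ Set.Icc (0 : Fin n → ℝ) 1 := by
    intro t ht
    refine Set.mem_Icc.mpr ⟨fun i => ?_, fun i => ?_⟩
    · have := (hxlb t ht i).1; simp only [Pi.zero_apply]; linarith
    · have := (hxlb t ht i).2; simpa using this
  set g : ℝ → ℝ := fun t => ψ (x t) with hgdef
  have hxc : Continuous x := by
    apply continuous_pi; intro i; fun_prop
  have hgc : ContinuousOn g (Set.Icc 0 1) :=
    hcont.comp hxc.continuousOn (fun t ht => hxcube t ht)
  have hUC := isCompact_Icc.uniformContinuousOn_of_continuous hgc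
  rw [Metric.uniformContinuousOn_iff] at hUC
  obtain ⟨d, hd, hWd⟩ := hUC η hη
  have W : ∀ s t θ : ℝ, s ∈ Set.Icc (0:ℝ) 1 → t ∈ Set.Icc (0:ℝ) 1 → |s - t| < d →
      θ ∈ Set.Icc (0:ℝ) 1 → (1 - θ) * g s + θ * g t ≤ g ((1 - θ) * s + θ * t) := by
    intro s t θ hs ht hst hθ
    have hgst : |g s - g t| < η := by
      have := hWd s hs t ht (by rwa [Real.dist_eq]); rwa [Real.dist_eq] at this
    set m := (1 - θ) * s + θ * t with hmdef
    have hmI : m ∈ Set.Icc (0:ℝ) 1 := by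
      constructor
      · have e1 : 0 ≤ (1 - θ) * s := mul_nonneg (by linarith [hθ.2]) hs.1
        have e2 : 0 ≤ θ * t := mul_nonneg hθ.1 ht.1
        rw [hmdef]; linarith
      · have e1 : (1 - θ) * s ≤ (1 - θ) * 1 :=
          mul_le_mul_of_nonneg_left hs.2 (by linarith [hθ.2])
        have e2 : θ * t ≤ θ * 1 := mul_le_mul_of_nonneg_left ht.2 hθ.1
        rw [hmdef]; nlinarith
    have hgs : g s = ψ (x s) := rfl
    have hgt : g t = ψ (x t) := rfl
    have hgm : g m = ψ (x m) := rfl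
    rcases le_total (g t) (g s) with hc | hc
    · -- g t ≤ g s : shift x s down by δ := g s - g t
      have hδ0 : 0 ≤ g s - g t := by linarith
      have hδη : g s - g t < η := by rwa [abs_of_nonneg hδ0] at hgst
      set y : Fin n → ℝ := fun i => x s i - (g s - g t) with hydef
      have hycube : y ∈ Set.Icc (0 : Fin n → ℝ) 1 := by
        refine Set.mem_Icc.mpr ⟨fun i => ?_, fun i => ?_⟩
        · have := (hxlb s hs i).1; simp only [hydef, Pi.zero_apply]; linarith
        · have := (hxlb s hs i).2; simp only [hydef, Pi.one_apply]; linarith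
      have hyx : (y + fun _ => g s - g t) = x s := by
        funext i; simp only [hydef, Pi.add_apply]; ring
      have hψy : ψ y = g t := by
        have h1 := ti y hycube (g s - g t) (by rw [hyx]; exact hxcube s hs)
        rw [hyx] at h1
        rw [← hgs] at h1; linarith
      have hqc' := hqc y (x t) hycube (hxcube t ht) (1 - θ)
        ⟨by linarith [hθ.2], by linarith [hθ.1]⟩
      have harg : (1 - θ) • y + (1 - (1 - θ)) • x t
          = fun i => x m i - (1 - θ) * (g s - g t) := by
        funext i
        simp only [hydef, Pi.add_apply, Pi.smul_apply, smul_eq_mul, hxdef, hmdef]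
        ring
      set z : Fin n → ℝ := fun i => x m i - (1 - θ) * (g s - g t) with hzdef
      have hfac0 : 0 ≤ (1 - θ) * (g s - g t) := mul_nonneg (by linarith [hθ.2]) hδ0
      have hfac1 : (1 - θ) * (g s - g t) ≤ 1 * (g s - g t) :=
        mul_le_mul_of_nonneg_right (by linarith [hθ.1]) hδ0
      have hzcube : z ∈ Set.Icc (0 : Fin n → ℝ) 1 := by
        refine Set.mem_Icc.mpr ⟨fun i => ?_, fun i => ?_⟩
        · have := (hxlb m hmI i).1; simp only [hzdef, Pi.zero_apply]; linarith
        · have := (hxlb m hmI i).2; simp only [hzdef, Pi.one_apply]; linarith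
      have hzx : (z + fun _ => (1 - θ) * (g s - g t)) = x m := by
        funext i; simp only [hzdef, Pi.add_apply]; ring
      have hψz : ψ (x m) = ψ z + (1 - θ) * (g s - g t) := by
        have h1 := ti z hzcube ((1 - θ) * (g s - g t)) (by rw [hzx]; exact hxcube m hmI)
        rw [hzx] at h1; exact h1
      have hmin : g t ≤ ψ z := by
        have h2 : ψ y ⊓ ψ (x t) ≤ ψ z := by rwa [harg] at hqc'
        rw [hψy, ← hgt] at h2
        simpa [min_self] using h2
      rw [← hgm] at hψz
      nlinarith [hψz, hmin]
    · -- g s ≤ g t : shift x t down by δ := g t - g s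
      have hδ0 : 0 ≤ g t - g s := by linarith
      have hδη : g t - g s < η := by
        rw [abs_sub_comm] at hgst
        rwa [abs_of_nonneg hδ0] at hgst
      set y : Fin n → ℝ := fun i => x t i - (g t - g s) with hydef
      have hycube : y ∈ Set.Icc (0 : Fin n → ℝ) 1 := by
        refine Set.mem_Icc.mpr ⟨fun i => ?_, fun i => ?_⟩
        · have := (hxlb t ht i).1; simp only [hydef, Pi.zero_apply]; linarith
        · have := (hxlb t ht i).2; simp only [hydef, Pi.one_apply]; linarith
      have hyx : (y + fun _ => g t - g s) = x t := by
        funext i; simp only [hydef, Pi.add_apply]; ring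
      have hψy : ψ y = g s := by
        have h1 := ti y hycube (g t - g s) (by rw [hyx]; exact hxcube t ht)
        rw [hyx] at h1
        rw [← hgt] at h1; linarith
      have hqc' := hqc (x s) y (hxcube s hs) hycube (1 - θ)
        ⟨by linarith [hθ.2], by linarith [hθ.1]⟩
      have harg : (1 - θ) • x s + (1 - (1 - θ)) • y
          = fun i => x m i - θ * (g t - g s) := by
        funext i
        simp only [hydef, Pi.add_apply, Pi.smul_apply, smul_eq_mul, hxdef, hmdef]
        ring
      set z : Fin n → ℝ := fun i => x m i - θ * (g t - g s) with hzdef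
      have hfac0 : 0 ≤ θ * (g t - g s) := mul_nonneg hθ.1 hδ0
      have hfac1 : θ * (g t - g s) ≤ 1 * (g t - g s) :=
        mul_le_mul_of_nonneg_right hθ.2 hδ0
      have hzcube : z ∈ Set.Icc (0 : Fin n → ℝ) 1 := by
        refine Set.mem_Icc.mpr ⟨fun i => ?_, fun i => ?_⟩
        · have := (hxlb m hmI i).1; simp only [hzdef, Pi.zero_apply]; linarith
        · have := (hxlb m hmI i).2; simp only [hzdef, Pi.one_apply]; linarith
      have hzx : (z + fun _ => θ * (g t - g s)) = x m := by
        funext i; simp only [hzdef, Pi.add_apply]; ring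
      have hψz : ψ (x m) = ψ z + θ * (g t - g s) := by
        have h1 := ti z hzcube (θ * (g t - g s)) (by rw [hzx]; exact hxcube m hmI)
        rw [hzx] at h1; exact h1
      have hmin : g s ≤ ψ z := by
        have h2 : ψ (x s) ⊓ ψ y ≤ ψ z := by rwa [harg] at hqc'
        rw [hψy, ← hgs] at h2
        simpa [min_self] using h2
      rw [← hgm] at hψz
      nlinarith [hψz, hmin]
  have hfin := stmt13_lemA g hgc d hd W (1 - α) ⟨by linarith [hα.2], by linarith [hα.1]⟩
  have hx0 : x 0 = u := by funext i; simp only [hxdef]; ring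
  have hx1 : x 1 = v := by funext i; simp only [hxdef]; ring
  have hxα : α • u + (1 - α) • v = x (1 - α) := by
    funext i; simp only [hxdef, Pi.add_apply, Pi.smul_apply, smul_eq_mul]; ring
  rw [hxα]
  have hg0 : g 0 = ψ u := by show ψ (x 0) = ψ u; rw [hx0]
  have hg1 : g 1 = ψ v := by show ψ (x 1) = ψ v; rw [hx1]
  rw [hg0, hg1] at hfin
  calc α * ψ u + (1 - α) * ψ v = (1 - (1 - α)) * ψ u + (1 - α) * ψ v := by ring
    _ ≤ g (1 - α) := hfin
    _ = ψ (x (1 - α)) := rfl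

section Stmt13Aux
variable {n : ℕ} (hn : 1 ≤ n) (ψ : (Fin n → ℝ) → ℝ)
  (hdiag : ∀ c : ℝ, c ∈ Set.Icc (0 : ℝ) 1 → ψ (fun _ => c) = c)
  (hmix : ∀ u : Fin n → ℝ, u ∈ Set.Icc (0 : Fin n → ℝ) 1 →
      ∀ c ∈ Set.Icc (0 : ℝ) 1, ∀ α ∈ Set.Ioo (0 : ℝ) 1,
      ψ (α • u + (1 - α) • (fun _ => c : Fin n → ℝ)) =
        ψ (α • u) + (1 - α) * c)

include hn hdiag hmix in
lemma stmt13_tiup : ∀ u : Fin n → ℝ, u ∈ Set.Icc (0 : Fin n → ℝ) 1 → ∀ c : ℝ, 0 ≤ c →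
    (u + fun _ => c) ∈ Set.Icc (0 : Fin n → ℝ) 1 →
    ψ (u + fun _ => c) = ψ u + c := by
  intro u hu c hc0 hmem
  obtain ⟨hu0, hu1⟩ := Set.mem_Icc.mp hu
  obtain ⟨hm0, hm1⟩ := Set.mem_Icc.mp hmem
  have i0 : Fin n := ⟨0, hn⟩
  have hc1 : c ≤ 1 := by
    have h1 := hm1 i0
    have h2 := hu0 i0
    simp only [Pi.add_apply, Pi.one_apply] at h1
    simp only [Pi.zero_apply] at h2
    linarith
  rcases eq_or_lt_of_le hc0 with hc | hc
  · rw [← hc]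
    have : (u + fun _ => (0:ℝ)) = u := by funext i; simp
    rw [this]; ring
  rcases eq_or_lt_of_le hc1 with hc1' | hc1'
  · -- c = 1 : then u = 0
    have hu0' : u = fun _ => (0:ℝ) := by
      funext i
      have h1 := hm1 i
      have h2 := hu0 i
      simp only [Pi.add_apply, Pi.one_apply] at h1
      simp only [Pi.zero_apply] at h2
      rw [← hc1'] at h1
      linarith
    rw [hu0']
    have e1 : ((fun _ => (0:ℝ)) + fun _ => c) = (fun _ : Fin n => c) := by funext i; simp
    rw [e1, hdiag c ⟨hc0, hc1⟩, hdiag 0 ⟨le_refl 0, by norm_num⟩]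
    ring
  · -- 0 < c < 1
    set w : Fin n → ℝ := fun i => u i / (1 - c) with hwdef
    have hc1c : 0 < 1 - c := by linarith
    have hw : w ∈ Set.Icc (0 : Fin n → ℝ) 1 := by
      refine Set.mem_Icc.mpr ⟨fun i => ?_, fun i => ?_⟩
      · have := hu0 i; simp only [Pi.zero_apply] at this ⊢
        exact div_nonneg this (le_of_lt hc1c)
      · have h1 := hm1 i
        simp only [Pi.add_apply, Pi.one_apply] at h1
        simp only [hwdef, Pi.one_apply]
        rw [div_le_one hc1c]; linarith
    have hmix' := hmix w hw 1 ⟨by norm_num, le_refl 1⟩ (1 - c) ⟨hc1c, by linarith⟩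
    have e1 : (1 - c) • w = u := by
      funext i
      simp only [hwdef, Pi.smul_apply, smul_eq_mul]
      field_simp
    have e2 : (1 - c) • w + (1 - (1 - c)) • (fun _ => (1:ℝ) : Fin n → ℝ)
        = u + fun _ => c := by
      funext i
      simp only [Pi.add_apply, Pi.smul_apply, smul_eq_mul, hwdef]
      field_simp
      ring
    rw [e2, e1] at hmix'
    rw [hmix']; ring
end Stmt13Aux


/-- Claim in the paper's proof of Theorem 6: a monotonic, continuous,
quasiconcave function on the unit cube with `ψ(c·1) = c` satisfying
`ψ(αu + (1−α)c·1) = ψ(αu) + (1−α)c` is translation-invariant and concave. -/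
theorem stmt_13 {n : ℕ} (hn : 1 ≤ n) (ψ : (Fin n → ℝ) → ℝ)
    (hmono : ∀ u v : Fin n → ℝ, u ∈ Set.Icc (0 : Fin n → ℝ) 1 →
      v ∈ Set.Icc (0 : Fin n → ℝ) 1 → (∀ i, v i < u i) → ψ v < ψ u)
    (hcont : ContinuousOn ψ (Set.Icc (0 : Fin n → ℝ) 1))
    (hqc : ∀ u v : Fin n → ℝ, u ∈ Set.Icc (0 : Fin n → ℝ) 1 →
      v ∈ Set.Icc (0 : Fin n → ℝ) 1 → ∀ α : ℝ, α ∈ Set.Icc (0 : ℝ) 1 →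
      min (ψ u) (ψ v) ≤ ψ (α • u + (1 - α) • v))
    (hdiag : ∀ c : ℝ, c ∈ Set.Icc (0 : ℝ) 1 → ψ (fun _ => c) = c)
    (hmix : ∀ u : Fin n → ℝ, u ∈ Set.Icc (0 : Fin n → ℝ) 1 →
      ∀ c ∈ Set.Icc (0 : ℝ) 1, ∀ α ∈ Set.Ioo (0 : ℝ) 1,
      ψ (α • u + (1 - α) • (fun _ => c : Fin n → ℝ)) =
        ψ (α • u) + (1 - α) * c) :
    (∀ u : Fin n → ℝ, u ∈ Set.Icc (0 : Fin n → ℝ) 1 → ∀ c : ℝ,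
      (u + fun _ => c) ∈ Set.Icc (0 : Fin n → ℝ) 1 →
      ψ (u + fun _ => c) = ψ u + c) ∧
    (∀ u v : Fin n → ℝ, u ∈ Set.Icc (0 : Fin n → ℝ) 1 →
      v ∈ Set.Icc (0 : Fin n → ℝ) 1 → ∀ α : ℝ, α ∈ Set.Icc (0 : ℝ) 1 →
      α * ψ u + (1 - α) * ψ v ≤ ψ (α • u + (1 - α) • v)) := by
  have tiup := stmt13_tiup hn ψ hdiag hmix
  have ti : ∀ u : Fin n → ℝ, u ∈ Set.Icc (0 : Fin n → ℝ) 1 → ∀ c : ℝ,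
      (u + fun _ => c) ∈ Set.Icc (0 : Fin n → ℝ) 1 →
      ψ (u + fun _ => c) = ψ u + c := by
    intro u hu c hmem
    rcases le_or_gt 0 c with h | h
    · exact tiup u hu c h hmem
    · have e : ((u + fun _ => c) + fun _ => (-c)) = u := by
        funext i; simp only [Pi.add_apply]; ring
      have h2 := tiup (u + fun _ => c) hmem (-c) (by linarith) (by rw [e]; exact hu)
      rw [e] at h2
      linarith
  refine ⟨ti, ?_⟩
  intro u v hu hv α hα
  obtain ⟨hu0, hu1⟩ := Set.mem_Icc.mp hu
  obtain ⟨hv0, hv1⟩ := Set.mem_Icc.mp hv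
  set ε : ℕ → ℝ := fun k => 1 / ((k : ℝ) + 1) with hεdef
  have hε0 : ∀ k, 0 < ε k := by
    intro k; rw [hεdef]; positivity
  have hε1 : ∀ k, ε k ≤ 1 := by
    intro k; rw [hεdef]
    rw [div_le_one (by positivity)]
    have : (0:ℝ) ≤ (k : ℝ) := Nat.cast_nonneg k
    linarith
  set U : ℕ → Fin n → ℝ := fun k i => (1 - ε k) * u i + ε k / 2 with hUdef
  set V : ℕ → Fin n → ℝ := fun k i => (1 - ε k) * v i + ε k / 2 with hVdef
  clear_value U V
  have hbnd : ∀ (w : Fin n → ℝ), (0:Fin n → ℝ) ≤ w → w ≤ 1 → ∀ k i,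
      ε k / 2 ≤ (1 - ε k) * w i + ε k / 2 ∧ (1 - ε k) * w i + ε k / 2 ≤ 1 := by
    intro w hw0 hw1 k i
    have h0 := hw0 i
    have h1 := hw1 i
    simp only [Pi.zero_apply] at h0
    simp only [Pi.one_apply] at h1
    have hk0 := hε0 k
    have hk1 := hε1 k
    constructor
    · nlinarith
    · nlinarith
  have hbU : ∀ k i, ε k / 2 ≤ U k i ∧ U k i ≤ 1 := by
    intro k i; rw [hUdef]; exact hbnd u hu0 hu1 k i
  have hbV : ∀ k i, ε k / 2 ≤ V k i ∧ V k i ≤ 1 := by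
    intro k i; rw [hVdef]; exact hbnd v hv0 hv1 k i
  have hineq : ∀ k, α * ψ (U k) + (1 - α) * ψ (V k) ≤ ψ (α • U k + (1 - α) • V k) :=
    fun k => stmt13_lemB ψ hcont hqc ti (ε k / 2) (by have := hε0 k; linarith)
      (U k) (V k) (hbU k) (hbV k) α hα
  have hcube : ∀ (w : Fin n → ℝ), (∀ i, ε 0 / 2 ≤ w i ∧ w i ≤ 1) → True := fun _ _ => trivial
  have hUcube : ∀ k, U k ∈ Set.Icc (0 : Fin n → ℝ) 1 := by
    intro k
    refine Set.mem_Icc.mpr ⟨fun i => ?_, fun i => ?_⟩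
    · have := (hbU k i).1; have := hε0 k
      simp only [Pi.zero_apply]; linarith
    · have := (hbU k i).2; simpa using this
  have hVcube : ∀ k, V k ∈ Set.Icc (0 : Fin n → ℝ) 1 := by
    intro k
    refine Set.mem_Icc.mpr ⟨fun i => ?_, fun i => ?_⟩
    · have := (hbV k i).1; have := hε0 k
      simp only [Pi.zero_apply]; linarith
    · have := (hbV k i).2; simpa using this
  have hα0 := hα.1
  have hα1 := hα.2
  have hWcube : ∀ k, α • U k + (1 - α) • V k ∈ Set.Icc (0 : Fin n → ℝ) 1 := by
    intro k
    obtain ⟨hU0, hU1⟩ := Set.mem_Icc.mp (hUcube k)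
    obtain ⟨hV0, hV1⟩ := Set.mem_Icc.mp (hVcube k)
    refine Set.mem_Icc.mpr ⟨fun i => ?_, fun i => ?_⟩
    · have e1 := hU0 i; have e2 := hV0 i
      simp only [Pi.zero_apply] at e1 e2 ⊢
      simp only [Pi.add_apply, Pi.smul_apply, smul_eq_mul]
      have := mul_nonneg hα0 e1
      have := mul_nonneg (by linarith : (0:ℝ) ≤ 1 - α) e2
      linarith
    · have e1 := hU1 i; have e2 := hV1 i
      simp only [Pi.one_apply] at e1 e2 ⊢
      simp only [Pi.add_apply, Pi.smul_apply, smul_eq_mul]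
      have := mul_le_mul_of_nonneg_left e1 hα0
      have := mul_le_mul_of_nonneg_left e2 (by linarith : (0:ℝ) ≤ 1 - α)
      nlinarith
  have hwcube : α • u + (1 - α) • v ∈ Set.Icc (0 : Fin n → ℝ) 1 := by
    refine Set.mem_Icc.mpr ⟨fun i => ?_, fun i => ?_⟩
    · have e1 := hu0 i; have e2 := hv0 i
      simp only [Pi.zero_apply] at e1 e2 ⊢
      simp only [Pi.add_apply, Pi.smul_apply, smul_eq_mul]
      have := mul_nonneg hα0 e1
      have := mul_nonneg (by linarith : (0:ℝ) ≤ 1 - α) e2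
      linarith
    · have e1 := hu1 i; have e2 := hv1 i
      simp only [Pi.one_apply] at e1 e2 ⊢
      simp only [Pi.add_apply, Pi.smul_apply, smul_eq_mul]
      have := mul_le_mul_of_nonneg_left e1 hα0
      have := mul_le_mul_of_nonneg_left e2 (by linarith : (0:ℝ) ≤ 1 - α)
      nlinarith
  have hεlim : Tendsto ε atTop (𝓝 0) := by
    rw [hεdef]
    exact tendsto_one_div_add_atTop_nhds_zero_nat
  have hlim : ∀ (w : Fin n → ℝ), Tendsto (fun k => fun i => (1 - ε k) * w i + ε k / 2)
      atTop (𝓝 w) := by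
    intro w
    rw [tendsto_pi_nhds]
    intro i
    have h1 : Tendsto (fun k => (1 - ε k) * w i + ε k / 2) atTop
        (𝓝 ((1 - 0) * w i + 0 / 2)) := by
      exact ((tendsto_const_nhds.sub hεlim).mul_const (w i)).add (hεlim.div_const 2)
    simpa using h1
  have hUlim : Tendsto U atTop (𝓝 u) := by rw [hUdef]; exact hlim u
  have hVlim : Tendsto V atTop (𝓝 v) := by rw [hVdef]; exact hlim v
  have hWlim : Tendsto (fun k => α • U k + (1 - α) • V k) atTop
      (𝓝 (α • u + (1 - α) • v)) :=
    (hUlim.const_smul α).add (hVlim.const_smul (1 - α))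
  have hψU : Tendsto (fun k => ψ (U k)) atTop (𝓝 (ψ u)) :=
    (hcont u hu).tendsto.comp
      (tendsto_nhdsWithin_iff.mpr ⟨hUlim, Filter.Eventually.of_forall hUcube⟩)
  have hψV : Tendsto (fun k => ψ (V k)) atTop (𝓝 (ψ v)) :=
    (hcont v hv).tendsto.comp
      (tendsto_nhdsWithin_iff.mpr ⟨hVlim, Filter.Eventually.of_forall hVcube⟩)
  have hψW : Tendsto (fun k => ψ (α • U k + (1 - α) • V k)) atTop
      (𝓝 (ψ (α • u + (1 - α) • v))) :=
    (hcont _ hwcube).tendsto.comp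
      (tendsto_nhdsWithin_iff.mpr ⟨hWlim, Filter.Eventually.of_forall hWcube⟩)
  exact le_of_tendsto_of_tendsto'
    ((hψU.const_mul α).add (hψV.const_mul (1 - α))) hψW hineq
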